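/- Schwenk's coalescence lemma for the adjacency matrix: if rooted graphs G_1 (root v_1) and G_2 (root v_2) satisfy that G_1 and G_2 are A-cospectral and G_1 - v_1 and G_2 - v_2 are A-cospectral, then for any rooted graph H with root u, the graph obtained by identifying u with v_1 in H ∪ G_1 is A-cospectral with the graph obtained by identifying u with v_2 in H ∪ G_2. -/

import Mathlib

open Matrix SimpleGraph Polynomial Classical

/-- The coalescence of a rooted graph `(H, u)` with a rooted graph `(G, v)`: the two roots
`u` and `v` are identified into a single vertex. -/
def coalesce {β α : Type*} (H : SimpleGraph β) (u : β) (G : SimpleGraph α) (v : α) :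
    SimpleGraph (β ⊕ {a : α // a ≠ v}) where
  Adj x y :=
    match x, y with
    | Sum.inl a, Sum.inl b => H.Adj a b
    | Sum.inl a, Sum.inr b => a = u ∧ G.Adj v b.1
    | Sum.inr a, Sum.inl b => b = u ∧ G.Adj v a.1
    | Sum.inr a, Sum.inr b => G.Adj a.1 b.1
  symm := by
    constructor
    rintro (a | a) (b | b) h
    · exact h.symm
    · exact ⟨h.1, h.2⟩
    · exact ⟨h.1, h.2⟩
    · exact h.symm
  loopless := by
    constructor
    rintro (a | a) h
    · exact H.irrefl h
    · exact G.irrefl h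

/-- The graph obtained by deleting a vertex. -/
def delVert {α : Type*} (G : SimpleGraph α) (v : α) : SimpleGraph {a : α // a ≠ v} :=
  G.induce {a : α | a ≠ v}

section helpers

variable {α : Type*} [Fintype α] (G : SimpleGraph α) (v : α)

omit [Fintype α] in
lemma delVert_adj (a b : {x : α // x ≠ v}) : (delVert G v).Adj a b ↔ G.Adj a.1 b.1 := Iff.rfl

/-- `v` together with the vertices other than `v` exhaust `α`. -/
noncomputable def eVert : Unit ⊕ {a : α // a ≠ v} ≃ α where
  toFun x := match x with | Sum.inl _ => v | Sum.inr a => a.1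
  invFun a := if h : a = v then Sum.inl () else Sum.inr ⟨a, h⟩
  left_inv := by
    rintro (⟨⟩ | ⟨a, h⟩)
    · simp
    · simp [h]
  right_inv := by intro a; by_cases h : a = v <;> simp [h]

lemma charmatrix_delVert (a b : {x : α // x ≠ v}) :
    charmatrix ((delVert G v).adjMatrix ℝ) a b = charmatrix (G.adjMatrix ℝ) a.1 b.1 := by
  by_cases h : a = b
  · subst h
    rw [charmatrix_apply_eq, charmatrix_apply_eq]
    simp [adjMatrix_apply, delVert_adj]
  · rw [charmatrix_apply_ne _ _ _ h, charmatrix_apply_ne _ _ _ (fun hh => h (Subtype.ext hh))]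
    simp [adjMatrix_apply, delVert_adj]

end helpers

section mg

variable {α : Type*} [Fintype α] (G : SimpleGraph α) (v : α)

/-- The "border" matrix `[[0, -c], [-c, xI - A(G-v)]]` where `c` is the row of
adjacencies of the root `v`. -/
noncomputable def Mg : Matrix (Unit ⊕ {a : α // a ≠ v}) (Unit ⊕ {a : α // a ≠ v}) ℝ[X] :=
  fun x y =>
    match x, y with
    | Sum.inl _, Sum.inl _ => 0
    | Sum.inl _, Sum.inr b => -C ((G.adjMatrix ℝ) v b.1)
    | Sum.inr a, Sum.inl _ => -C ((G.adjMatrix ℝ) a.1 v)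
    | Sum.inr a, Sum.inr b => charmatrix ((delVert G v).adjMatrix ℝ) a b

lemma det_Mg : (Mg G v).det =
    (G.adjMatrix ℝ).charpoly - X * ((delVert G v).adjMatrix ℝ).charpoly := by
  classical
  set ev := (eVert v) with he
  set A' : Matrix (Unit ⊕ {a : α // a ≠ v}) (Unit ⊕ {a : α // a ≠ v}) ℝ :=
    reindex ev.symm ev.symm (G.adjMatrix ℝ) with hA'
  have hA'e : ∀ x y, A' x y = (G.adjMatrix ℝ) (ev x) (ev y) := by
    intro x y; simp [hA']
  have hcp : (G.adjMatrix ℝ).charpoly = (charmatrix A').det := by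
    rw [hA', ← Matrix.charpoly, Matrix.charpoly_reindex]
  set M := charmatrix A' with hM
  set i : Unit ⊕ {a : α // a ≠ v} := Sum.inl () with hi
  set p : Unit ⊕ {a : α // a ≠ v} → ℝ[X] :=
    (fun j => if j = i then (X : ℝ[X]) else 0) with hp
  set q : Unit ⊕ {a : α // a ≠ v} → ℝ[X] := (Mg G v) i with hq
  have hevl : ev i = v := rfl
  have hevr : ∀ b : {a : α // a ≠ v}, ev (Sum.inr b) = b.1 := fun _ => rfl
  have hAvv : A' i i = 0 := by
    rw [hA'e, hevl]
    simp [adjMatrix_apply]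
  have hchar22 : ∀ a b : {x : α // x ≠ v},
      M (Sum.inr a) (Sum.inr b) = charmatrix ((delVert G v).adjMatrix ℝ) a b := by
    intro a b
    rw [hM, charmatrix_delVert G v a b]
    by_cases h : a = b
    · subst h
      rw [charmatrix_apply_eq, charmatrix_apply_eq, hA'e, hevr]
    · rw [charmatrix_apply_ne _ _ _ (by simp [h]),
        charmatrix_apply_ne _ _ _ (fun hh => h (Subtype.ext hh)), hA'e, hevr, hevr]
  have hrow : M i = p + q := by
    funext j
    rcases j with ⟨⟩ | b
    · show M i i = p i + q i
      rw [hM, charmatrix_apply_eq, hAvv]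
      simp [hp, hq, Mg, hi]
    · have hne : i ≠ Sum.inr b := by simp [hi]
      show M i (Sum.inr b) = p (Sum.inr b) + q (Sum.inr b)
      rw [hM, charmatrix_apply_ne _ _ _ hne]
      have h1 : p (Sum.inr b) = 0 := by simp [hp, hi]
      have h2 : q (Sum.inr b) = -C ((G.adjMatrix ℝ) v b.1) := rfl
      rw [h1, h2, zero_add, hA'e, hevl, hevr]
  have hsplit : M.det = (M.updateRow i p).det + (M.updateRow i q).det := by
    conv_lhs => rw [← Matrix.updateRow_eq_self M i, hrow]
    exact Matrix.det_updateRow_add M i p q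
  have hq' : M.updateRow i q = Mg G v := by
    funext x y
    rcases x with ⟨⟩ | a
    · rw [show (Sum.inl () : Unit ⊕ {a : α // a ≠ v}) = i from rfl, Matrix.updateRow_self]
    · rw [Matrix.updateRow_ne (by simp [hi])]
      rcases y with ⟨⟩ | b
      · have h2 : Mg G v (Sum.inr a) (Sum.inl ()) = -C ((G.adjMatrix ℝ) a.1 v) := rfl
        rw [h2, hM, charmatrix_apply_ne _ _ _ (by simp), hA'e, hevl, hevr]
      · exact hchar22 a b
  have hp' : (M.updateRow i p).det = X * ((delVert G v).adjMatrix ℝ).charpoly := by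
    set P := M.updateRow i p with hP
    have h12 : P.toBlocks₁₂ = 0 := by
      funext x b
      simp [hP, Matrix.toBlocks₁₂, hi, hp]
    have h11 : P.toBlocks₁₁ = Matrix.of (fun (_ _ : Unit) => (X : ℝ[X])) := by
      funext x y
      simp [hP, Matrix.toBlocks₁₁, hi, hp]
    have h22 : P.toBlocks₂₂ = charmatrix ((delVert G v).adjMatrix ℝ) := by
      funext a b
      simp only [hP, Matrix.toBlocks₂₂, Matrix.of_apply,
        Matrix.updateRow_ne (show (Sum.inr a : Unit ⊕ {a : α // a ≠ v}) ≠ i by simp [hi])]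
      exact hchar22 a b
    rw [← Matrix.fromBlocks_toBlocks P, h12, h11, h22, Matrix.det_fromBlocks_zero₁₂]
    rw [Matrix.det_unique]
    rfl
  rw [hcp, hsplit, hp', hq']
  ring

end mg

section entries

lemma adj_entry_eq {γ δ : Type*} [Fintype γ] [Fintype δ] (G1 : SimpleGraph γ)
    (G2 : SimpleGraph δ) [DecidableRel G1.Adj] [DecidableRel G2.Adj]
    (x y : γ) (z w : δ) (h : G1.Adj x y ↔ G2.Adj z w) :
    (G1.adjMatrix ℝ) x y = (G2.adjMatrix ℝ) z w := by
  by_cases hh : G2.Adj z w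
  · rw [adjMatrix_apply, adjMatrix_apply, if_pos (h.mpr hh), if_pos hh]
  · rw [adjMatrix_apply, adjMatrix_apply, if_neg (fun e => hh (h.mp e)), if_neg hh]

lemma charmatrix_adj_eq {γ δ : Type*} [Fintype γ] [Fintype δ] [DecidableEq γ] [DecidableEq δ]
    (G1 : SimpleGraph γ)
    (G2 : SimpleGraph δ) [DecidableRel G1.Adj] [DecidableRel G2.Adj]
    {x y : γ} {z w : δ} (hxy : (x = y) ↔ (z = w))
    (h : G1.Adj x y ↔ G2.Adj z w) :
    charmatrix (G1.adjMatrix ℝ) x y = charmatrix (G2.adjMatrix ℝ) z w := by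
  by_cases hd : z = w
  · obtain rfl := hd
    obtain rfl := hxy.mpr rfl
    rw [charmatrix_apply_eq, charmatrix_apply_eq, adj_entry_eq G1 G2 _ _ _ _ h]
  · rw [charmatrix_apply_ne _ _ _ (fun e => hd (hxy.mp e)), charmatrix_apply_ne _ _ _ hd,
      adj_entry_eq G1 G2 _ _ _ _ h]

end entries

section esplit

variable {α β : Type*} (v : α) (u : β)

/-- Regroup `β ⊕ (α - v)` as `(β - u) ⊕ (u ⊕ (α - v))`. -/
noncomputable def eSplit : (β ⊕ {a : α // a ≠ v}) ≃ ({b : β // b ≠ u} ⊕ (Unit ⊕ {a : α // a ≠ v})) :=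
  (((eVert u).symm.sumCongr (Equiv.refl _)).trans
    (((Equiv.sumComm Unit _).sumCongr (Equiv.refl _)).trans
      (Equiv.sumAssoc _ Unit _)))

lemma eSplit_symm_inl (t : {b : β // b ≠ u}) :
    (eSplit v u).symm (Sum.inl t) = Sum.inl t.1 := by
  rw [Equiv.symm_apply_eq]
  simp [eSplit, eVert, t.2]

lemma eSplit_symm_inr_inl :
    (eSplit v u).symm (Sum.inr (Sum.inl ())) = Sum.inl u := by
  rw [Equiv.symm_apply_eq]
  simp [eSplit, eVert]

lemma eSplit_symm_inr_inr (s : {a : α // a ≠ v}) :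
    (eSplit v u).symm (Sum.inr (Sum.inr s)) = Sum.inr s := by
  rw [Equiv.symm_apply_eq]
  simp [eSplit, eVert]

end esplit

set_option maxHeartbeats 2000000 in
theorem coalesce_charpoly {α β : Type*} [Fintype α] [Fintype β]
    (G : SimpleGraph α) (v : α) (H : SimpleGraph β) (u : β) :
    ((coalesce H u G v).adjMatrix ℝ).charpoly
      = (H.adjMatrix ℝ).charpoly * ((delVert G v).adjMatrix ℝ).charpoly
        + ((delVert H u).adjMatrix ℝ).charpoly *
          ((G.adjMatrix ℝ).charpoly - X * ((delVert G v).adjMatrix ℝ).charpoly) := by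
  set N := charmatrix ((coalesce H u G v).adjMatrix ℝ) with hN
  set i : β ⊕ {a : α // a ≠ v} := Sum.inl u with hi
  -- entries of N
  have Nll : ∀ a b : β, N (Sum.inl a) (Sum.inl b) = charmatrix (H.adjMatrix ℝ) a b := by
    intro a b
    rw [hN]
    apply charmatrix_adj_eq
    · simp
    · exact Iff.rfl
  have Nrr : ∀ s t : {a : α // a ≠ v},
      N (Sum.inr s) (Sum.inr t) = charmatrix ((delVert G v).adjMatrix ℝ) s t := by
    intro s t
    rw [hN]
    apply charmatrix_adj_eq
    · simp
    · exact Iff.rfl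
  have Nlr : ∀ (a : β) (s : {a : α // a ≠ v}),
      N (Sum.inl a) (Sum.inr s) = if a = u then -C ((G.adjMatrix ℝ) v s.1) else 0 := by
    intro a s
    rw [hN, charmatrix_apply_ne _ _ _ (by simp)]
    by_cases h : a = u
    · have hadj : (coalesce H u G v).Adj (Sum.inl a) (Sum.inr s) ↔ G.Adj v s.1 :=
        ⟨fun hh => hh.2, fun hh => ⟨h, hh⟩⟩
      rw [if_pos h, adj_entry_eq (coalesce H u G v) G (Sum.inl a) (Sum.inr s) v s.1 hadj]
    · rw [if_neg h, adjMatrix_apply,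
        if_neg (fun hh : (coalesce H u G v).Adj (Sum.inl a) (Sum.inr s) => h hh.1)]
      simp
  have Nrl : ∀ (s : {a : α // a ≠ v}) (b : β),
      N (Sum.inr s) (Sum.inl b) = if b = u then -C ((G.adjMatrix ℝ) v s.1) else 0 := by
    intro s b
    rw [hN, charmatrix_apply_ne _ _ _ (by simp)]
    by_cases h : b = u
    · have hadj : (coalesce H u G v).Adj (Sum.inr s) (Sum.inl b) ↔ G.Adj v s.1 :=
        ⟨fun hh => hh.2, fun hh => ⟨h, hh⟩⟩
      rw [if_pos h, adj_entry_eq (coalesce H u G v) G (Sum.inr s) (Sum.inl b) v s.1 hadj]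
    · rw [if_neg h, adjMatrix_apply,
        if_neg (fun hh : (coalesce H u G v).Adj (Sum.inr s) (Sum.inl b) => h hh.1)]
      simp
  -- row split at `i`
  set r1 : β ⊕ {a : α // a ≠ v} → ℝ[X] := Sum.elim (fun b => N i (Sum.inl b)) 0 with hr1
  set r2 : β ⊕ {a : α // a ≠ v} → ℝ[X] := Sum.elim 0 (fun s => N i (Sum.inr s)) with hr2
  have hrow : N i = r1 + r2 := by
    funext j
    rcases j with b | s <;> simp [hr1, hr2]
  have hsplit : N.det = (N.updateRow i r1).det + (N.updateRow i r2).det := by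
    conv_lhs => rw [← Matrix.updateRow_eq_self N i, hrow]
    exact Matrix.det_updateRow_add N i r1 r2
  set N1 := N.updateRow i r1 with hN1
  set N2 := N.updateRow i r2 with hN2
  -- column splits at `i`
  set c1 : β ⊕ {a : α // a ≠ v} → ℝ[X] := Sum.elim (fun b => N (Sum.inl b) i) 0 with hc1
  set c1' : β ⊕ {a : α // a ≠ v} → ℝ[X] :=
    Sum.elim (fun b => if b = u then 0 else N (Sum.inl b) i) 0 with hc1'
  set c2 : β ⊕ {a : α // a ≠ v} → ℝ[X] := Sum.elim 0 (fun s => N (Sum.inr s) i) with hc2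
  have hcol1 : (fun x => N1 x i) = c1 + c2 := by
    funext x
    rw [hN1, Matrix.updateRow_apply]
    rcases x with b | s
    · by_cases hb : (Sum.inl b : β ⊕ {a : α // a ≠ v}) = i
      · have hbu : b = u := by rw [hi] at hb; exact Sum.inl_injective hb
        subst hbu
        rw [if_pos hb]
        simp [hr1, hc1, hc2, hi]
      · rw [if_neg hb]
        simp [hc1, hc2]
    · rw [if_neg (by simp [hi])]
      simp [hc1, hc2]
  have hsplit1 : N1.det = (N1.updateCol i c1).det + (N1.updateCol i c2).det := by
    conv_lhs => rw [← Matrix.updateCol_eq_self N1 i, hcol1]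
    exact Matrix.det_updateCol_add N1 i c1 c2
  have hcol2 : (fun x => N2 x i) = c1' + c2 := by
    funext x
    rw [hN2, Matrix.updateRow_apply]
    rcases x with b | s
    · by_cases hb : (Sum.inl b : β ⊕ {a : α // a ≠ v}) = i
      · have hbu : b = u := by rw [hi] at hb; exact Sum.inl_injective hb
        subst hbu
        rw [if_pos hb]
        simp [hr2, hc1', hc2, hi]
      · have hbu : ¬ b = u := fun hh => hb (by rw [hi, hh])
        rw [if_neg hb]
        simp [hc1', hc2, hbu]
    · rw [if_neg (by simp [hi])]
      simp [hc1', hc2]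
  have hsplit2 : N2.det = (N2.updateCol i c1').det + (N2.updateCol i c2).det := by
    conv_lhs => rw [← Matrix.updateCol_eq_self N2 i, hcol2]
    exact Matrix.det_updateCol_add N2 i c1' c2
  -- P11
  have hP11 : (N1.updateCol i c1).det
      = (H.adjMatrix ℝ).charpoly * ((delVert G v).adjMatrix ℝ).charpoly := by
    set P := N1.updateCol i c1 with hP
    have h21 : P.toBlocks₂₁ = 0 := by
      funext s b
      simp only [Matrix.toBlocks₂₁, Matrix.of_apply, hP, Matrix.updateCol_apply]
      by_cases hb : (Sum.inl b : β ⊕ {a : α // a ≠ v}) = i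
      · rw [if_pos hb]; simp [hc1]
      · rw [if_neg hb, hN1, Matrix.updateRow_ne (by simp [hi]), Nrl,
          if_neg (fun hh => hb (by rw [hi, hh]))]
        rfl
    have h11 : P.toBlocks₁₁ = charmatrix (H.adjMatrix ℝ) := by
      funext a b
      simp only [Matrix.toBlocks₁₁, Matrix.of_apply, hP, Matrix.updateCol_apply]
      by_cases hb : (Sum.inl b : β ⊕ {a : α // a ≠ v}) = i
      · have hbu : b = u := by rw [hi] at hb; exact Sum.inl_injective hb
        rw [if_pos hb]
        simp only [hc1, Sum.elim_inl]
        rw [hi, Nll, hbu]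
      · rw [if_neg hb, hN1, Matrix.updateRow_apply]
        by_cases ha : (Sum.inl a : β ⊕ {a : α // a ≠ v}) = i
        · have hau : a = u := by rw [hi] at ha; exact Sum.inl_injective ha
          rw [if_pos ha]
          simp only [hr1, Sum.elim_inl]
          rw [hi, Nll, hau]
        · rw [if_neg ha, Nll]
    have h22 : P.toBlocks₂₂ = charmatrix ((delVert G v).adjMatrix ℝ) := by
      funext s t
      simp only [Matrix.toBlocks₂₂, Matrix.of_apply, hP, Matrix.updateCol_apply]
      rw [if_neg (by simp [hi]), hN1, Matrix.updateRow_ne (by simp [hi]), Nrr]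
    rw [← Matrix.fromBlocks_toBlocks P, h21, h11, h22, Matrix.det_fromBlocks_zero₂₁]
    rfl
  -- P12 = 0
  have hP12 : (N1.updateCol i c2).det = 0 := by
    set P := N1.updateCol i c2 with hP
    have h12 : P.toBlocks₁₂ = 0 := by
      funext a s
      simp only [Matrix.toBlocks₁₂, Matrix.of_apply, hP, Matrix.updateCol_apply]
      rw [if_neg (by simp [hi]), hN1, Matrix.updateRow_apply]
      by_cases ha : (Sum.inl a : β ⊕ {a : α // a ≠ v}) = i
      · rw [if_pos ha]; simp [hr1]
      · have hau : ¬ a = u := fun hh => ha (by rw [hi, hh])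
        rw [if_neg ha, Nlr, if_neg hau]
        rfl
    have hAzero : P.toBlocks₁₁.det = 0 := by
      apply Matrix.det_eq_zero_of_column_eq_zero u
      intro a
      simp only [Matrix.toBlocks₁₁, Matrix.of_apply, hP, Matrix.updateCol_apply]
      simp [hc2, hi]
    rw [← Matrix.fromBlocks_toBlocks P, h12, Matrix.det_fromBlocks_zero₁₂, hAzero, zero_mul]
  -- P21 = 0
  have hP21 : (N2.updateCol i c1').det = 0 := by
    set P := N2.updateCol i c1' with hP
    have h21 : P.toBlocks₂₁ = 0 := by
      funext s b
      simp only [Matrix.toBlocks₂₁, Matrix.of_apply, hP, Matrix.updateCol_apply]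
      by_cases hb : (Sum.inl b : β ⊕ {a : α // a ≠ v}) = i
      · rw [if_pos hb]; simp [hc1']
      · rw [if_neg hb, hN2, Matrix.updateRow_ne (by simp [hi]), Nrl,
          if_neg (fun hh => hb (by rw [hi, hh]))]
        rfl
    have hAzero : P.toBlocks₁₁.det = 0 := by
      apply Matrix.det_eq_zero_of_row_eq_zero u
      intro b
      simp only [Matrix.toBlocks₁₁, Matrix.of_apply, hP, Matrix.updateCol_apply]
      by_cases hb : (Sum.inl b : β ⊕ {a : α // a ≠ v}) = i
      · rw [if_pos hb]; simp [hc1']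
      · rw [if_neg hb, hN2, Matrix.updateRow_apply, if_pos hi.symm]
        simp [hr2]
    rw [← Matrix.fromBlocks_toBlocks P, h21, Matrix.det_fromBlocks_zero₂₁, hAzero, zero_mul]
  -- P22
  have hP22 : (N2.updateCol i c2).det
      = ((delVert H u).adjMatrix ℝ).charpoly *
        ((G.adjMatrix ℝ).charpoly - X * ((delVert G v).adjMatrix ℝ).charpoly) := by
    set P := N2.updateCol i c2 with hP
    have hdet : P.det = (Matrix.reindex (eSplit v u) (eSplit v u) P).det :=
      (Matrix.det_reindex_self _ _).symm
    set Q := Matrix.reindex (eSplit v u) (eSplit v u) P with hQ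
    have hQapp : ∀ x y, Q x y = P ((eSplit v u).symm x) ((eSplit v u).symm y) := by
      intro x y; simp [hQ]
    have h21 : Q.toBlocks₂₁ = 0 := by
      funext x t
      simp only [Matrix.toBlocks₂₁, Matrix.of_apply]
      rw [hQapp, eSplit_symm_inl]
      have hcol : (Sum.inl t.1 : β ⊕ {a : α // a ≠ v}) ≠ i := by simp [hi, t.2]
      rcases x with ⟨⟩ | s
      · rw [eSplit_symm_inr_inl, hP, Matrix.updateCol_ne hcol, hN2, ← hi,
          Matrix.updateRow_self]
        simp [hr2]
      · rw [eSplit_symm_inr_inr, hP, Matrix.updateCol_ne hcol, hN2,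
          Matrix.updateRow_ne (by simp [hi]), Nrl, if_neg t.2]
        rfl
    have h11 : Q.toBlocks₁₁ = charmatrix ((delVert H u).adjMatrix ℝ) := by
      funext t t'
      simp only [Matrix.toBlocks₁₁, Matrix.of_apply]
      rw [hQapp, eSplit_symm_inl, eSplit_symm_inl, hP,
        Matrix.updateCol_ne (by simp [hi, t'.2]), hN2,
        Matrix.updateRow_ne (by simp [hi, t.2]), Nll, charmatrix_delVert H u t t']
    have h22 : Q.toBlocks₂₂ = Mg G v := by
      funext x y
      simp only [Matrix.toBlocks₂₂, Matrix.of_apply]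
      rw [hQapp]
      rcases x with ⟨⟩ | s <;> rcases y with ⟨⟩ | t
      · rw [eSplit_symm_inr_inl, hP, ← hi, Matrix.updateCol_self]
        simp [hc2, hi, Mg]
      · rw [eSplit_symm_inr_inl, eSplit_symm_inr_inr, hP,
          Matrix.updateCol_ne (by simp [hi]), hN2, ← hi, Matrix.updateRow_self]
        simp only [hr2, Sum.elim_inr]
        rw [Nlr, if_pos rfl]
        rfl
      · rw [eSplit_symm_inr_inr, eSplit_symm_inr_inl, hP, ← hi, Matrix.updateCol_self]
        simp only [hc2, Sum.elim_inr]
        rw [hi, Nrl, if_pos rfl]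
        show -C ((G.adjMatrix ℝ) v s.1) = -C ((G.adjMatrix ℝ) s.1 v)
        rw [adj_entry_eq G G v s.1 s.1 v (G.adj_comm _ _)]
      · rw [eSplit_symm_inr_inr, eSplit_symm_inr_inr, hP,
          Matrix.updateCol_ne (by simp [hi]), hN2,
          Matrix.updateRow_ne (by simp [hi]), Nrr]
        rfl
    rw [hdet, ← Matrix.fromBlocks_toBlocks Q, h21, h11, h22, Matrix.det_fromBlocks_zero₂₁,
      det_Mg]
    rfl
  have : ((coalesce H u G v).adjMatrix ℝ).charpoly = N.det := rfl
  rw [this, hsplit, hsplit1, hsplit2, hP11, hP12, hP21, hP22]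
  ring

/-- Schwenk's coalescence lemma for the adjacency matrix: if `G₁` and `G₂` are
`A`-cospectral rooted graphs whose root-deleted graphs are also `A`-cospectral, then
coalescing any rooted graph `H` with `G₁` gives a graph `A`-cospectral with the
coalescence of `H` with `G₂`. -/
theorem schwenk_coalescence
    {α₁ α₂ β : Type*} [Fintype α₁] [Fintype α₂] [Fintype β]
    (G₁ : SimpleGraph α₁) (v₁ : α₁) (G₂ : SimpleGraph α₂) (v₂ : α₂)
    (hco : (G₁.adjMatrix ℝ).charpoly = (G₂.adjMatrix ℝ).charpoly)
    (hco' : ((delVert G₁ v₁).adjMatrix ℝ).charpoly = ((delVert G₂ v₂).adjMatrix ℝ).charpoly)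
    (H : SimpleGraph β) (u : β) :
    ((coalesce H u G₁ v₁).adjMatrix ℝ).charpoly =
      ((coalesce H u G₂ v₂).adjMatrix ℝ).charpoly := by
  rw [coalesce_charpoly G₁ v₁ H u, coalesce_charpoly G₂ v₂ H u, hco, hco']
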